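/- Let (A, ∂) be a chain complex with A a graded commutative algebra (∂ not assumed a derivation), and let i : (C, ∂_C) → (A, ∂) be a subcomplex with retraction I : A → C satisfying I∘i = id_C. Let d be the canonical coderivation extension of ∂ to SA, d̃ = τ̃^{-1} d τ̃, and suppose ∂_∞ is a coderivation on SC with a dg-coalgebra map ι : (SC, ∂_∞) → (SA, d̃) extending i (i.e. agreeing with i on the linear part). Then τ̃_C := Ĩ ∘ τ̃ ∘ ι is an isomorphism of differential graded coalgebras from (SC, ∂_∞) to (SC, d_C), where d_C is the canonical coderivation extension of ∂_C and Ĩ is the canonical coalgebra extension of I. -/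

import Mathlib

open TensorProduct PiTensorProduct

variable (K : Type) [Field K]

/-- Coassociativity of a (not necessarily counital) comultiplication. -/
def Coassoc {C : Type} [AddCommGroup C] [Module K C] (Δ : C →ₗ[K] C ⊗[K] C) : Prop :=
  (TensorProduct.assoc K C C C).toLinearMap ∘ₗ Δ.rTensor C ∘ₗ Δ = Δ.lTensor C ∘ₗ Δ

/-- (Graded) cocommutativity, signs suppressed. -/
def Cocomm {C : Type} [AddCommGroup C] [Module K C] (Δ : C →ₗ[K] C ⊗[K] C) : Prop :=
  (TensorProduct.comm K C C).toLinearMap ∘ₗ Δ = Δ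

/-- Prepending one tensor factor: `M ⊗ M^{⊗n} → M^{⊗(n+1)}`. -/
noncomputable def consT (M : Type) [AddCommGroup M] [Module K M] (n : ℕ) :
    M ⊗[K] (⨂[K]^n M) →ₗ[K] ⨂[K]^(n+1) M :=
  (PiTensorProduct.reindex K (fun _ => M) (finCongr (by omega) : Fin (1+n) ≃ Fin (n+1))).toLinearMap
    ∘ₗ (PiTensorProduct.reindex K (fun _ => M) finSumFinEquiv).toLinearMap
    ∘ₗ (PiTensorProduct.tmulEquiv (ι := Fin 1) (ι₂ := Fin n) K M).toLinearMap
    ∘ₗ (LinearMap.rTensor (⨂[K]^n M) (PiTensorProduct.subsingletonEquiv (s := fun _ => M) (0 : Fin 1)).symm.toLinearMap)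

/-- The iterated (reduced) comultiplication `Δ^n : C → C^{⊗(n+1)}`. -/
noncomputable def iterComul {C : Type} [AddCommGroup C] [Module K C]
    (Δ : C →ₗ[K] C ⊗[K] C) : (n : ℕ) → C →ₗ[K] ⨂[K]^(n+1) C
  | 0 => (PiTensorProduct.subsingletonEquiv (s := fun _ => C) (0 : Fin 1)).symm.toLinearMap
  | n+1 => consT K C (n+1) ∘ₗ (LinearMap.lTensor C (iterComul Δ n)) ∘ₗ Δ

/-- Conilpotency: every element is killed by some iterated comultiplication. -/
def Conilpotent {C : Type} [AddCommGroup C] [Module K C] (Δ : C →ₗ[K] C ⊗[K] C) : Prop :=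
  ∀ x : C, ∃ n, iterComul K Δ n x = 0

/-- `F` is a morphism of (non-counital) coalgebras. -/
def IsCoalgMap {C D : Type} [AddCommGroup C] [Module K C] [AddCommGroup D] [Module K D]
    (ΔC : C →ₗ[K] C ⊗[K] C) (ΔD : D →ₗ[K] D ⊗[K] D) (F : C →ₗ[K] D) : Prop :=
  ΔD ∘ₗ F = TensorProduct.map F F ∘ₗ ΔC

/-- `D` is a coderivation of the coalgebra `(S, Δ)` (signs suppressed). -/
def IsCoderiv {S : Type} [AddCommGroup S] [Module K S]
    (Δ : S →ₗ[K] S ⊗[K] S) (D : S →ₗ[K] S) : Prop :=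
  Δ ∘ₗ D = (D.rTensor S + D.lTensor S) ∘ₗ Δ

/-- A model of the cofree cocommutative conilpotent coalgebra `SA = ⊕_{n≥1} Λⁿ A`
on a vector space `A`, packaged with its weight grading (`piece n = ΛⁿA`), the
inclusion `incl : A → Λ¹A ⊆ SA`, the projection `proj : SA → A` onto the linear
summand, the (wedge) product, and the cofreeness universal property. -/
structure SymCoalg (K : Type) [Field K] (A : Type) [AddCommGroup A] [Module K A] where
  S : Type
  [acg : AddCommGroup S]
  [mod : Module K S]
  Δ : S →ₗ[K] S ⊗[K] S
  coassoc : Coassoc K Δ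
  cocomm : Cocomm K Δ
  conil : Conilpotent K Δ
  proj : S →ₗ[K] A
  incl : A →ₗ[K] S
  proj_incl : proj ∘ₗ incl = LinearMap.id
  /-- the weight grading: `piece n` models `ΛⁿA` -/
  piece : ℕ → Submodule K S
  piece_zero : piece 0 = ⊥
  piece_supr : (⨆ n, piece n) = ⊤
  piece_indep : iSupIndep piece
  incl_piece : LinearMap.range incl = piece 1
  proj_piece : ∀ n, n ≠ 1 → ∀ x ∈ piece n, proj x = 0
  Δ_ker_one : ∀ x ∈ piece 1, Δ x = 0
  /-- the wedge product on `SA` (signs suppressed) -/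
  wedge : S →ₗ[K] S →ₗ[K] S
  wedge_comm : ∀ x y, wedge x y = wedge y x
  wedge_assoc : ∀ x y z, wedge (wedge x y) z = wedge x (wedge y z)
  wedge_piece : ∀ m n, ∀ x ∈ piece m, ∀ y ∈ piece n, wedge x y ∈ piece (m + n)
  /-- `SA` is generated under the wedge product by `A = Λ¹A` -/
  gen : ∀ p : Submodule K S, LinearMap.range incl ≤ p →
      (∀ x y, x ∈ p → y ∈ p → wedge x y ∈ p) → p = ⊤
  /-- cofreeness: unique coalgebra lift of linear maps out of conilpotent
  cocommutative coalgebras -/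
  cofree : ∀ {C : Type} [AddCommGroup C] [Module K C] (ΔC : C →ₗ[K] C ⊗[K] C),
      Coassoc K ΔC → Cocomm K ΔC → Conilpotent K ΔC → ∀ f : C →ₗ[K] A,
      ∃! F : C →ₗ[K] S, IsCoalgMap K ΔC Δ F ∧ proj ∘ₗ F = f
  /-- unique coderivation extension property of the cofree coalgebra -/
  coderExt : ∀ g : S →ₗ[K] A, ∃! D : S →ₗ[K] S, IsCoderiv K Δ D ∧ proj ∘ₗ D = g

attribute [instance] SymCoalg.acg SymCoalg.mod

/-- The tautologous map `τ : SA → A`, `x₁∧⋯∧xₙ ↦ x₁⋯xₙ`: it is characterized as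
the multiplicative extension of the identity of `A`. -/
def IsTau {K : Type} [Field K] {A : Type} [CommRing A] [Algebra K A]
    (P : SymCoalg K A) (τ : P.S →ₗ[K] A) : Prop :=
  τ ∘ₗ P.incl = LinearMap.id ∧ ∀ x y : P.S, τ (P.wedge x y) = τ x * τ y

/-- The cumulant bijection `τ̃ : SA → SA`: the canonical coalgebra lift of `τ`,
i.e. the unique coalgebra endomorphism with `proj ∘ τ̃ = τ`. -/
def IsCumul {K : Type} [Field K] {A : Type} [CommRing A] [Algebra K A]
    (P : SymCoalg K A) (τ : P.S →ₗ[K] A) (τt : P.S →ₗ[K] P.S) : Prop :=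
  IsTau P τ ∧ IsCoalgMap K P.Δ P.Δ τt ∧ P.proj ∘ₗ τt = τ

/- ================= Auxiliary lemmas ================= -/

/-- Composition of coalgebra maps is a coalgebra map. -/
lemma aux_isCoalgMap_comp {C D E : Type} [AddCommGroup C] [Module K C] [AddCommGroup D]
    [Module K D] [AddCommGroup E] [Module K E]
    {ΔC : C →ₗ[K] C ⊗[K] C} {ΔD : D →ₗ[K] D ⊗[K] D} {ΔE : E →ₗ[K] E ⊗[K] E}
    {F : C →ₗ[K] D} {G : D →ₗ[K] E} (hF : IsCoalgMap K ΔC ΔD F) (hG : IsCoalgMap K ΔD ΔE G) :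
    IsCoalgMap K ΔC ΔE (G ∘ₗ F) := by
  unfold IsCoalgMap at *
  calc ΔE ∘ₗ (G ∘ₗ F) = (ΔE ∘ₗ G) ∘ₗ F := by rw [LinearMap.comp_assoc]
    _ = TensorProduct.map G G ∘ₗ (ΔD ∘ₗ F) := by rw [hG, LinearMap.comp_assoc]
    _ = (TensorProduct.map G G ∘ₗ TensorProduct.map F F) ∘ₗ ΔC := by
        rw [hF, LinearMap.comp_assoc]
    _ = TensorProduct.map (G ∘ₗ F) (G ∘ₗ F) ∘ₗ ΔC := by rw [TensorProduct.map_comp]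

lemma aux_consT_injective (M : Type) [AddCommGroup M] [Module K M] (n : ℕ) :
    Function.Injective (consT K M n) := by
  unfold consT
  simp only [LinearMap.coe_comp, LinearEquiv.coe_coe]
  exact (LinearEquiv.injective _).comp ((LinearEquiv.injective _).comp
    ((LinearEquiv.injective _).comp
      (Module.Flat.rTensor_preserves_injective_linearMap _ (LinearEquiv.injective _))))

/-- A coalgebra endomorphism of a cocommutative conilpotent coalgebra which is the
identity on the kernel of the comultiplication is injective. -/
lemma aux_coalg_endo_injective {S : Type} [AddCommGroup S] [Module K S]
    (Δ : S →ₗ[K] S ⊗[K] S) (hcc : Cocomm K Δ) (hconil : Conilpotent K Δ)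
    (F : S →ₗ[K] S) (hF : IsCoalgMap K Δ Δ F) (hker : ∀ x, Δ x = 0 → F x = x) :
    Function.Injective F := by
  have key : ∀ n (x : S), iterComul K Δ n x = 0 → F x = 0 → x = 0 := by
    intro n
    induction n with
    | zero =>
      intro x hx _
      have hx' : (PiTensorProduct.subsingletonEquiv (s := fun _ => S) (0 : Fin 1)).symm x = 0 := hx
      exact (LinearEquiv.map_eq_zero_iff _).mp hx'
    | succ n ih =>
      intro x hx hFx
      set φ := iterComul K Δ n with hφ
      have h1 : φ.lTensor S (Δ x) = 0 := by
        apply aux_consT_injective K S (n + 1)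
        rw [map_zero]
        simpa [iterComul, LinearMap.comp_apply, hφ] using hx
      have hsym : (TensorProduct.comm K S S) (Δ x) = Δ x := by
        have := LinearMap.congr_fun hcc x
        simpa using this
      have hswap : ∀ u : S ⊗[K] S,
          φ.rTensor S ((TensorProduct.comm K S S) u) =
            (TensorProduct.comm K S (⨂[K]^(n + 1) S)) (φ.lTensor S u) := by
        intro u
        induction u using TensorProduct.induction_on with
        | zero => simp
        | tmul a b => simp
        | add u v hu hv => simp [map_add, hu, hv]
      have h2 : φ.rTensor S (Δ x) = 0 := by
        rw [← hsym, hswap, h1, map_zero]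
      set N := LinearMap.ker φ with hN
      have hexact := LinearMap.exact_subtype_ker_map φ
      have e1 := Module.Flat.rTensor_exact (R := K) S hexact
      obtain ⟨t₁, ht₁⟩ := (e1 (Δ x)).mp h2
      have hcomm1 : φ.lTensor S (N.subtype.rTensor S t₁) =
          (N.subtype.rTensor (⨂[K]^(n + 1) S)) (φ.lTensor N t₁) := by
        rw [← LinearMap.comp_apply, ← LinearMap.comp_apply,
          LinearMap.lTensor_comp_rTensor, LinearMap.rTensor_comp_lTensor]
      have h3 : φ.lTensor N t₁ = 0 := by
        apply Module.Flat.rTensor_preserves_injective_linearMap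
          (N.subtype) N.injective_subtype
        rw [map_zero, ← hcomm1, ht₁, h1]
      have e2 := Module.Flat.lTensor_exact (R := K) N hexact
      obtain ⟨t₂, ht₂⟩ := (e2 t₁).mp h3
      have hmapιι : TensorProduct.map N.subtype N.subtype t₂ = Δ x := by
        rw [← ht₁, ← ht₂, ← LinearMap.comp_apply, LinearMap.rTensor_comp_lTensor]
      have hFt : TensorProduct.map F F (Δ x) = 0 := by
        have hp := LinearMap.congr_fun hF x
        simp only [LinearMap.comp_apply] at hp
        rw [← hp, hFx, map_zero]
      have hFι : Function.Injective (F ∘ₗ N.subtype) := by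
        rw [← LinearMap.ker_eq_bot, LinearMap.ker_eq_bot']
        intro y hy
        have hy1 : φ y.1 = 0 := LinearMap.mem_ker.mp y.2
        exact Subtype.ext (ih y.1 hy1 hy)
      have inj2 : Function.Injective
          (TensorProduct.map (F ∘ₗ N.subtype) (F ∘ₗ N.subtype)) := by
        rw [← LinearMap.lTensor_comp_rTensor]
        rw [LinearMap.coe_comp]
        exact (Module.Flat.lTensor_preserves_injective_linearMap _ hFι).comp
          (Module.Flat.rTensor_preserves_injective_linearMap _ hFι)
      have ht₂0 : t₂ = 0 := by
        apply inj2
        rw [map_zero, TensorProduct.map_comp, LinearMap.comp_apply, hmapιι, hFt]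
      have hΔx : Δ x = 0 := by rw [← hmapιι, ht₂0, map_zero]
      rw [← hker x hΔx]
      exact hFx
  rw [← LinearMap.ker_eq_bot, LinearMap.ker_eq_bot']
  intro m hm
  obtain ⟨n, hn⟩ := hconil m
  exact key n m hn hm

/-- Every element of the kernel of the comultiplication of `SA` lies in the linear
summand `Λ¹A`. -/
lemma aux_kerΔ_incl {A : Type} [AddCommGroup A] [Module K A] (P : SymCoalg K A) :
    ∀ x : P.S, P.Δ x = 0 → P.incl (P.proj x) = x := by
  have hΔincl : ∀ a : A, P.Δ (P.incl a) = 0 := fun a =>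
    P.Δ_ker_one _ (P.incl_piece ▸ LinearMap.mem_range_self _ a)
  intro x hx
  set N := LinearMap.ker P.Δ with hN
  have hconil0 : Conilpotent K (0 : N →ₗ[K] N ⊗[K] N) := by
    intro y
    exact ⟨1, by simp [iterComul, LinearMap.comp_apply]⟩
  obtain ⟨F, hFs, hFu⟩ := P.cofree (0 : N →ₗ[K] N ⊗[K] N)
    (by simp [Coassoc]) (by simp [Cocomm]) hconil0 (P.proj ∘ₗ N.subtype)
  have hj : IsCoalgMap K (0 : N →ₗ[K] N ⊗[K] N) P.Δ N.subtype ∧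
      P.proj ∘ₗ N.subtype = P.proj ∘ₗ N.subtype := by
    refine ⟨?_, rfl⟩
    unfold IsCoalgMap
    ext y
    simp only [LinearMap.comp_apply, LinearMap.zero_apply, map_zero]
    exact LinearMap.mem_ker.mp y.2
  have hk : IsCoalgMap K (0 : N →ₗ[K] N ⊗[K] N) P.Δ (P.incl ∘ₗ P.proj ∘ₗ N.subtype) ∧
      P.proj ∘ₗ (P.incl ∘ₗ P.proj ∘ₗ N.subtype) = P.proj ∘ₗ N.subtype := by
    constructor
    · unfold IsCoalgMap
      ext y
      simp only [LinearMap.comp_apply, LinearMap.zero_apply, map_zero]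
      exact hΔincl _
    · ext y
      simp only [LinearMap.comp_apply]
      exact LinearMap.congr_fun P.proj_incl _
  have heq : N.subtype = P.incl ∘ₗ P.proj ∘ₗ N.subtype := (hFu _ hj).trans (hFu _ hk).symm
  have := LinearMap.congr_fun heq ⟨x, hx⟩
  simpa using this.symm

/-- Theorem 1 of the paper: the induced cumulant bijection
`τ̃_C = Ĩ ∘ τ̃ ∘ ι` is an isomorphism of differential graded coalgebras from
`(SC, ∂_∞)` to `(SC, d_C)`. -/
theorem induced_cumulant_bijection {A : Type} [CommRing A] [Algebra K A]
    {C : Type} [AddCommGroup C] [Module K C]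
    (bd : A →ₗ[K] A) (hbd2 : bd ∘ₗ bd = 0)
    (bdC : C →ₗ[K] C) (hbdC2 : bdC ∘ₗ bdC = 0)
    (i : C →ₗ[K] A) (I : A →ₗ[K] C) (hIi : I ∘ₗ i = LinearMap.id)
    (hichain : bd ∘ₗ i = i ∘ₗ bdC) (hIchain : I ∘ₗ bd = bdC ∘ₗ I)
    (s : A →ₗ[K] A) (hs : bd ∘ₗ s + s ∘ₗ bd = i ∘ₗ I - LinearMap.id)
    (P : SymCoalg K A) (Q : SymCoalg K C)
    (tau : P.S →ₗ[K] A) (taut : P.S →ₗ[K] P.S) (htau : IsCumul P tau taut)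
    (d : P.S →ₗ[K] P.S) (hd : IsCoderiv K P.Δ d ∧ P.proj ∘ₗ d = bd ∘ₗ P.proj)
    (dt : P.S →ₗ[K] P.S) (hdt : taut ∘ₗ dt = d ∘ₗ taut)
    (dC : Q.S →ₗ[K] Q.S) (hdC : IsCoderiv K Q.Δ dC ∧ Q.proj ∘ₗ dC = bdC ∘ₗ Q.proj)
    (dinf : Q.S →ₗ[K] Q.S) (hdinf : IsCoderiv K Q.Δ dinf)
    (ιt : Q.S →ₗ[K] P.S) (hιt : IsCoalgMap K Q.Δ P.Δ ιt)
    (hιlin : P.proj ∘ₗ ιt ∘ₗ Q.incl = i)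
    (hιdg : ιt ∘ₗ dinf = dt ∘ₗ ιt)
    (It : P.S →ₗ[K] Q.S)
    (hIt : IsCoalgMap K P.Δ Q.Δ It ∧ Q.proj ∘ₗ It = I ∘ₗ P.proj) :
    IsCoalgMap K Q.Δ Q.Δ (It ∘ₗ taut ∘ₗ ιt) ∧
      (It ∘ₗ taut ∘ₗ ιt) ∘ₗ dinf = dC ∘ₗ (It ∘ₗ taut ∘ₗ ιt) ∧
      Function.Bijective (It ∘ₗ taut ∘ₗ ιt) := by
  set G : Q.S →ₗ[K] Q.S := It ∘ₗ taut ∘ₗ ιt with hGdef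
  have hGx : ∀ z : Q.S, G z = It (taut (ιt z)) := fun _ => rfl
  obtain ⟨⟨htau_incl, htau_mul⟩, htautcoalg, htautproj⟩ := htau
  obtain ⟨hItcoalg, hItproj⟩ := hIt
  obtain ⟨hdcoder, hdproj⟩ := hd
  obtain ⟨hdCcoder, hdCproj⟩ := hdC
  have hPincl0 : ∀ a : A, P.Δ (P.incl a) = 0 := fun a =>
    P.Δ_ker_one _ (P.incl_piece ▸ LinearMap.mem_range_self _ a)
  have hkerP := aux_kerΔ_incl K P
  have hkerQ := aux_kerΔ_incl K Q
  have coalg_pt : ∀ {X Y : Type} [AddCommGroup X] [Module K X] [AddCommGroup Y] [Module K Y]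
      (ΔX : X →ₗ[K] X ⊗[K] X) (ΔY : Y →ₗ[K] Y ⊗[K] Y) (F : X →ₗ[K] Y),
      IsCoalgMap K ΔX ΔY F → ∀ x, ΔX x = 0 → ΔY (F x) = 0 := by
    intro X Y _ _ _ _ ΔX ΔY F hFc x hx
    have := LinearMap.congr_fun hFc x
    simp only [LinearMap.comp_apply] at this
    rw [this, hx, map_zero]
  have hGcoalg : IsCoalgMap K Q.Δ Q.Δ G :=
    aux_isCoalgMap_comp K (aux_isCoalgMap_comp K hιt htautcoalg) hItcoalg
  -- G is the identity on the kernel of the comultiplication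
  have hGker : ∀ x : Q.S, Q.Δ x = 0 → G x = x := by
    intro x hx
    have h1 : P.Δ (ιt x) = 0 := coalg_pt _ _ _ hιt x hx
    have h2 : ιt x = P.incl (P.proj (ιt x)) := (hkerP _ h1).symm
    have htaut_incl : ∀ a : A, taut (P.incl a) = P.incl a := by
      intro a
      have h3 : P.Δ (taut (P.incl a)) = 0 := coalg_pt _ _ _ htautcoalg _ (hPincl0 a)
      have h4 := hkerP _ h3
      have h5 : P.proj (taut (P.incl a)) = tau (P.incl a) := LinearMap.congr_fun htautproj _
      have h6 : tau (P.incl a) = a := LinearMap.congr_fun htau_incl a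
      rw [← h4, h5, h6]
    have hIt_incl : ∀ a : A, It (P.incl a) = Q.incl (I a) := by
      intro a
      have h3 : Q.Δ (It (P.incl a)) = 0 := coalg_pt _ _ _ hItcoalg _ (hPincl0 a)
      have h4 := hkerQ _ h3
      have h5 : Q.proj (It (P.incl a)) = I (P.proj (P.incl a)) := LinearMap.congr_fun hItproj _
      have h6 : P.proj (P.incl a) = a := LinearMap.congr_fun P.proj_incl a
      rw [← h4, h5, h6]
    have hxi : x = Q.incl (Q.proj x) := (hkerQ _ hx).symm
    have ha : P.proj (ιt x) = i (Q.proj x) := by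
      conv_lhs => rw [hxi]
      exact LinearMap.congr_fun hιlin (Q.proj x)
    show It (taut (ιt x)) = x
    rw [h2, htaut_incl, hIt_incl, ha]
    have hIiq : I (i (Q.proj x)) = Q.proj x := LinearMap.congr_fun hIi _
    rw [hIiq, ← hxi]
  have hGinj : Function.Injective G :=
    aux_coalg_endo_injective K Q.Δ Q.cocomm Q.conil G hGcoalg hGker
  -- build the inverse via the cofree property
  obtain ⟨Ginv, hGinv⟩ := G.exists_leftInverse_of_injective (LinearMap.ker_eq_bot.mpr hGinj)
  obtain ⟨H, ⟨hHcoalg, hHproj⟩, hHu⟩ :=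
    Q.cofree Q.Δ Q.coassoc Q.cocomm Q.conil (Q.proj ∘ₗ Ginv)
  obtain ⟨F₀, hF₀, hF₀u⟩ := Q.cofree Q.Δ Q.coassoc Q.cocomm Q.conil Q.proj
  have hid_cm : IsCoalgMap K Q.Δ Q.Δ (LinearMap.id : Q.S →ₗ[K] Q.S) := by
    unfold IsCoalgMap
    rw [LinearMap.comp_id, TensorProduct.map_id, LinearMap.id_comp]
  have hid : (LinearMap.id : Q.S →ₗ[K] Q.S) = F₀ := hF₀u _ ⟨hid_cm, LinearMap.comp_id _⟩
  have hHG : H ∘ₗ G = LinearMap.id := by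
    have hHGcm : IsCoalgMap K Q.Δ Q.Δ (H ∘ₗ G) := aux_isCoalgMap_comp K hGcoalg hHcoalg
    have hHGproj : Q.proj ∘ₗ (H ∘ₗ G) = Q.proj := by
      calc Q.proj ∘ₗ (H ∘ₗ G) = (Q.proj ∘ₗ H) ∘ₗ G := by rw [LinearMap.comp_assoc]
        _ = (Q.proj ∘ₗ Ginv) ∘ₗ G := by rw [hHproj]
        _ = Q.proj ∘ₗ (Ginv ∘ₗ G) := by rw [LinearMap.comp_assoc]
        _ = Q.proj := by rw [hGinv, LinearMap.comp_id]
    exact (hF₀u _ ⟨hHGcm, hHGproj⟩).trans hid.symm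
  have hHker : ∀ x, Q.Δ x = 0 → H x = x := by
    intro x hx
    have h1 : H (G x) = x := LinearMap.congr_fun hHG x
    calc H x = H (G x) := by rw [hGker x hx]
      _ = x := h1
  have hHinj : Function.Injective H :=
    aux_coalg_endo_injective K Q.Δ Q.cocomm Q.conil H hHcoalg hHker
  have hGH : ∀ y, G (H y) = y := by
    intro y
    apply hHinj
    exact LinearMap.congr_fun hHG (H y)
  have hbij : Function.Bijective G := ⟨hGinj, fun y => ⟨H y, hGH y⟩⟩
  -- the chain map property
  have htau_dt : ∀ x : P.S, tau (dt x) = bd (tau x) := by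
    intro x
    have h1 : P.proj (taut (dt x)) = tau (dt x) := LinearMap.congr_fun htautproj _
    have h2 : taut (dt x) = d (taut x) := LinearMap.congr_fun hdt x
    have h3 : P.proj (d (taut x)) = bd (P.proj (taut x)) := LinearMap.congr_fun hdproj _
    have h4 : P.proj (taut x) = tau x := LinearMap.congr_fun htautproj _
    rw [← h1, h2, h3, h4]
  have hproj_chain : ∀ x : Q.S, Q.proj (G (dinf x)) = bdC (Q.proj (G x)) := by
    intro x
    have e1 : ∀ z : Q.S, Q.proj (G z) = I (tau (ιt z)) := by
      intro z
      have a1 : Q.proj (It (taut (ιt z))) = I (P.proj (taut (ιt z))) :=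
        LinearMap.congr_fun hItproj _
      have a2 : P.proj (taut (ιt z)) = tau (ιt z) := LinearMap.congr_fun htautproj _
      rw [hGx, a1, a2]
    rw [e1, e1]
    have b1 : ιt (dinf x) = dt (ιt x) := LinearMap.congr_fun hιdg x
    have b2 : I (bd (tau (ιt x))) = bdC (I (tau (ιt x))) := LinearMap.congr_fun hIchain _
    rw [b1, htau_dt, b2]
  set D' : Q.S →ₗ[K] Q.S := G ∘ₗ (dinf ∘ₗ H) with hD'
  have hD'lift : ∀ u : Q.S ⊗[K] Q.S,
      TensorProduct.map G G ((dinf.rTensor Q.S + dinf.lTensor Q.S)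
        (TensorProduct.map H H u)) = (D'.rTensor Q.S + D'.lTensor Q.S) u := by
    intro u
    induction u using TensorProduct.induction_on with
    | zero => simp
    | tmul a b =>
      simp only [TensorProduct.map_tmul, LinearMap.add_apply, LinearMap.rTensor_tmul,
        LinearMap.lTensor_tmul, map_add, hD', LinearMap.comp_apply, hGH a, hGH b]
    | add u v hu hv => simp only [map_add, LinearMap.add_apply] at hu hv ⊢; rw [hu, hv]
  have hD'coder : IsCoderiv K Q.Δ D' := by
    unfold IsCoderiv
    ext y
    have p1 : Q.Δ (G (dinf (H y))) = TensorProduct.map G G (Q.Δ (dinf (H y))) := by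
      have := LinearMap.congr_fun hGcoalg (dinf (H y))
      simpa only [LinearMap.comp_apply] using this
    have p2 : Q.Δ (dinf (H y)) = (dinf.rTensor Q.S + dinf.lTensor Q.S) (Q.Δ (H y)) := by
      have := LinearMap.congr_fun hdinf (H y)
      simpa only [LinearMap.comp_apply] using this
    have p3 : Q.Δ (H y) = TensorProduct.map H H (Q.Δ y) := by
      have := LinearMap.congr_fun hHcoalg y
      simpa only [LinearMap.comp_apply] using this
    show Q.Δ (D' y) = ((D'.rTensor Q.S + D'.lTensor Q.S) ∘ₗ Q.Δ) y
    have hD'y : D' y = G (dinf (H y)) := rfl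
    rw [hD'y, p1, p2, p3, hD'lift]
    rfl
  have hD'proj : Q.proj ∘ₗ D' = bdC ∘ₗ Q.proj := by
    ext y
    show Q.proj (G (dinf (H y))) = bdC (Q.proj y)
    rw [hproj_chain (H y), hGH y]
  obtain ⟨D₀, hD₀, hD₀u⟩ := Q.coderExt (bdC ∘ₗ Q.proj)
  have hdCeq : dC = D₀ := hD₀u _ ⟨hdCcoder, hdCproj⟩
  have hD'eq : D' = D₀ := hD₀u _ ⟨hD'coder, hD'proj⟩
  have hchain : G ∘ₗ dinf = dC ∘ₗ G := by
    rw [hdCeq.trans hD'eq.symm, hD']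
    ext y
    show G (dinf y) = G (dinf (H (G y)))
    have hy : H (G y) = y := LinearMap.congr_fun hHG y
    rw [hy]
  exact ⟨hGcoalg, hchain, hbij⟩
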